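/- Suppose real sequences Δ_1,...,Δ_T ≥ 0, and vectors w_0 = 0, w_1, ..., w_T in a Hilbert space, and a fixed vector w, satisfy: (i) ‖w_t‖² ≤ ‖w_{t-1}‖² + c·Δ_t for all t, with c > 0, and (ii) ⟨w_t, w⟩ ≥ ⟨w_{t-1}, w⟩ + Δ_t − L_t for all t, where L_t ≥ 0. Then Σ_{t=1}^T Δ_t ≤ (‖w‖·√c + √(Σ_{t=1}^T L_t))². -/

import Mathlib

open Finset

/-- Abstract perceptron mistake bound. -/
theorem abstract_perceptron_bound {H : Type*} [NormedAddCommGroup H]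
    [InnerProductSpace ℝ H] (T : ℕ) (c : ℝ) (hc : 0 < c)
    (Δ L : ℕ → ℝ) (w : ℕ → H) (v : H) (hw0 : w 0 = 0)
    (hΔ : ∀ t ∈ Finset.Icc 1 T, 0 ≤ Δ t)
    (hL : ∀ t ∈ Finset.Icc 1 T, 0 ≤ L t)
    (hnorm : ∀ t ∈ Finset.Icc 1 T, ‖w t‖ ^ 2 ≤ ‖w (t - 1)‖ ^ 2 + c * Δ t)
    (hinner : ∀ t ∈ Finset.Icc 1 T,
      (inner ℝ (w t) v : ℝ) ≥ (inner ℝ (w (t - 1)) v : ℝ) + Δ t - L t) :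
    ∑ t ∈ Finset.Icc 1 T, Δ t ≤
      (‖v‖ * Real.sqrt c + Real.sqrt (∑ t ∈ Finset.Icc 1 T, L t)) ^ 2 := by
  have key1 : ∀ n, n ≤ T → ‖w n‖ ^ 2 ≤ c * ∑ t ∈ Finset.Icc 1 n, Δ t := by
    intro n hn
    induction n with
    | zero => simp [hw0]
    | succ k ih =>
      have hk : k ≤ T := Nat.le_of_succ_le hn
      have h1 := hnorm (k + 1) (Finset.mem_Icc.mpr ⟨Nat.succ_le_succ (Nat.zero_le k), hn⟩)
      rw [Finset.sum_Icc_succ_top (Nat.succ_le_succ (Nat.zero_le k))]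
      simp only [Nat.add_sub_cancel] at h1
      have := ih hk
      nlinarith
  have key2 : ∀ n, n ≤ T →
      (∑ t ∈ Finset.Icc 1 n, Δ t) - (∑ t ∈ Finset.Icc 1 n, L t) ≤ (inner ℝ (w n) v : ℝ) := by
    intro n hn
    induction n with
    | zero => simp [hw0]
    | succ k ih =>
      have hk : k ≤ T := Nat.le_of_succ_le hn
      have h1 := hinner (k + 1) (Finset.mem_Icc.mpr ⟨Nat.succ_le_succ (Nat.zero_le k), hn⟩)
      rw [Finset.sum_Icc_succ_top (Nat.succ_le_succ (Nat.zero_le k)),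
        Finset.sum_Icc_succ_top (Nat.succ_le_succ (Nat.zero_le k))]
      simp only [Nat.add_sub_cancel] at h1
      have := ih hk
      linarith
  set x := ∑ t ∈ Finset.Icc 1 T, Δ t with hxdef
  set l := ∑ t ∈ Finset.Icc 1 T, L t with hldef
  have hx0 : 0 ≤ x := Finset.sum_nonneg hΔ
  have hl0 : 0 ≤ l := Finset.sum_nonneg hL
  have hA : ‖w T‖ ^ 2 ≤ c * x := key1 T le_rfl
  have hB : x - l ≤ (inner ℝ (w T) v : ℝ) := key2 T le_rfl
  have hCS : (inner ℝ (w T) v : ℝ) ≤ ‖w T‖ * ‖v‖ := real_inner_le_norm _ _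
  have hwT : ‖w T‖ ≤ Real.sqrt c * Real.sqrt x := by
    have : ‖w T‖ ≤ Real.sqrt (c * x) := by
      rw [← Real.sqrt_sq (norm_nonneg (w T))]
      exact Real.sqrt_le_sqrt hA
    rwa [Real.sqrt_mul hc.le] at this
  set s := Real.sqrt x with hsdef
  set m := Real.sqrt l with hmdef
  set a := ‖v‖ * Real.sqrt c with hadef
  have hs0 : 0 ≤ s := Real.sqrt_nonneg _
  have hm0 : 0 ≤ m := Real.sqrt_nonneg _
  have ha0 : 0 ≤ a := mul_nonneg (norm_nonneg v) (Real.sqrt_nonneg c)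
  have hs2 : s ^ 2 = x := Real.sq_sqrt hx0
  have hm2 : m ^ 2 = l := Real.sq_sqrt hl0
  have hmain : x - l ≤ a * s := by
    calc x - l ≤ (inner ℝ (w T) v : ℝ) := hB
    _ ≤ ‖w T‖ * ‖v‖ := hCS
    _ ≤ (Real.sqrt c * s) * ‖v‖ := by
        exact mul_le_mul_of_nonneg_right hwT (norm_nonneg v)
    _ = a * s := by ring
  -- from s² - m² ≤ a s deduce s ≤ a + m, hence x ≤ (a+m)²
  have hsle : s ≤ a + m := by
    nlinarith [sq_nonneg (s - m), sq_nonneg (s + m)]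
  nlinarith [sq_nonneg (a + m - s)]
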